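/- For any symmetric p×p matrix Ψ with Δ^T Ψ Δ ≥ 0 for all Δ, set J, and γ > 0: κ'_RE ≤ (2+γ)|J| κ_{1,J,J}^(γ), where κ'_RE = inf{|J|·(Δ^T Ψ Δ)/|Δ_J|_1^2 : Δ ∈ C_J^(γ), Δ≠0} and κ_{1,J,J}^(γ) = inf{|ΨΔ|_∞ : Δ ∈ C_J^(γ), |Δ_J|_1 = 1}. -/

import Mathlib

open Matrix

/-- `κ'_RE ≤ (2+γ)|J| κ_{1,J,J}^(γ)` for a symmetric positive
semidefinite matrix `Ψ`. -/
theorem stmt2 (p : ℕ) (Ψ : Matrix (Fin p) (Fin p) ℝ) (hΨsymm : Ψ.IsSymm)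
    (hΨpsd : ∀ Δ : Fin p → ℝ, 0 ≤ Δ ⬝ᵥ Ψ.mulVec Δ)
    (J : Finset (Fin p)) (γ : ℝ) (hγ : 0 < γ) :
    sInf {x : ℝ | ∃ Δ : Fin p → ℝ, Δ ≠ 0 ∧
        (∑ k ∈ Jᶜ, |Δ k| ≤ (1 + γ) * ∑ k ∈ J, |Δ k|) ∧
        x = (J.card : ℝ) * (Δ ⬝ᵥ Ψ.mulVec Δ) / (∑ k ∈ J, |Δ k|) ^ 2} ≤
    (2 + γ) * (J.card : ℝ) *
      sInf {x : ℝ | ∃ Δ : Fin p → ℝ,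
        (∑ k ∈ Jᶜ, |Δ k| ≤ (1 + γ) * ∑ k ∈ J, |Δ k|) ∧
        (∑ k ∈ J, |Δ k| = 1) ∧
        x = ⨆ k, |Ψ.mulVec Δ k|} := by
  set A := {x : ℝ | ∃ Δ : Fin p → ℝ, Δ ≠ 0 ∧
        (∑ k ∈ Jᶜ, |Δ k| ≤ (1 + γ) * ∑ k ∈ J, |Δ k|) ∧
        x = (J.card : ℝ) * (Δ ⬝ᵥ Ψ.mulVec Δ) / (∑ k ∈ J, |Δ k|) ^ 2} with hA
  set B := {x : ℝ | ∃ Δ : Fin p → ℝ,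
        (∑ k ∈ Jᶜ, |Δ k| ≤ (1 + γ) * ∑ k ∈ J, |Δ k|) ∧
        (∑ k ∈ J, |Δ k| = 1) ∧
        x = ⨆ k, |Ψ.mulVec Δ k|} with hB
  rcases J.eq_empty_or_nonempty with hJ | hJne
  · -- both sets are empty
    have hAe : A = ∅ := by
      ext x
      simp only [hA, Set.mem_setOf_eq, Set.mem_empty_iff_false, iff_false]
      rintro ⟨Δ, hΔ0, hcone, -⟩
      apply hΔ0
      have hsum : ∑ k ∈ Jᶜ, |Δ k| ≤ 0 := by
        simpa [hJ] using hcone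
      funext k
      have hk : k ∈ Jᶜ := by simp [hJ]
      have := (Finset.sum_eq_zero_iff_of_nonneg
        (fun i _ => abs_nonneg (Δ i))).mp
        (le_antisymm hsum (Finset.sum_nonneg fun i _ => abs_nonneg (Δ i))) k hk
      simpa [abs_eq_zero] using this
    have hBe : B = ∅ := by
      ext x
      simp only [hB, Set.mem_setOf_eq, Set.mem_empty_iff_false, iff_false]
      rintro ⟨Δ, -, hone, -⟩
      simp [hJ] at hone
    rw [hAe, hBe]
    simp [Real.sInf_empty]
  · -- J nonempty case
    have hcpos : (0 : ℝ) < (2 + γ) * (J.card : ℝ) := by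
      have : (0 : ℝ) < (J.card : ℝ) := by
        exact_mod_cast Finset.card_pos.mpr hJne
      positivity
    -- A is bounded below by 0
    have hAbdd : BddBelow A := by
      refine ⟨0, fun x hx => ?_⟩
      rcases hx with ⟨Δ, -, -, rfl⟩
      have h1 : (0:ℝ) ≤ (J.card : ℝ) * (Δ ⬝ᵥ Ψ.mulVec Δ) :=
        mul_nonneg (Nat.cast_nonneg _) (hΨpsd Δ)
      positivity
    -- B is nonempty
    obtain ⟨j, hj⟩ := hJne
    have hBne : B.Nonempty := by
      refine ⟨⨆ k, |Ψ.mulVec (fun i => if i = j then 1 else 0) k|,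
        (fun i => if i = j then 1 else 0), ?_, ?_, rfl⟩
      · have h1 : ∑ k ∈ Jᶜ, |if k = j then (1:ℝ) else 0| = 0 := by
          apply Finset.sum_eq_zero
          intro k hk
          have : k ≠ j := fun h => (Finset.mem_compl.mp hk) (h ▸ hj)
          simp [this]
        have h2 : (0:ℝ) ≤ (1 + γ) * ∑ k ∈ J, |if k = j then (1:ℝ) else 0| := by
          apply mul_nonneg (by linarith)
          exact Finset.sum_nonneg fun i _ => abs_nonneg _
        linarith [h1.le, h2]
      · rw [Finset.sum_eq_single j]
        · simp
        · intro b _ hb; simp [hb]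
        · intro h; exact absurd hj h
    -- main bound: sInf A ≤ c * x for every x ∈ B
    have key : ∀ x ∈ B, sInf A ≤ (2 + γ) * (J.card : ℝ) * x := by
      rintro x ⟨Δ, hcone, hone, rfl⟩
      set M := ⨆ k, |Ψ.mulVec Δ k| with hM
      have hp : 0 < p := Fin.pos_iff_nonempty.mpr ⟨j⟩
      have hbdd : BddAbove (Set.range fun k => |Ψ.mulVec Δ k|) :=
        Set.Finite.bddAbove (Set.finite_range _)
      have hMle : ∀ k, |Ψ.mulVec Δ k| ≤ M := fun k => le_ciSup hbdd k
      have hM0 : 0 ≤ M := le_trans (abs_nonneg _) (hMle ⟨0, hp⟩)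
      have hΔ0 : Δ ≠ 0 := by
        intro h
        rw [h] at hone
        simp at hone
      -- quadratic form bound
      have hquad : Δ ⬝ᵥ Ψ.mulVec Δ ≤ (2 + γ) * M := by
        have h1 : Δ ⬝ᵥ Ψ.mulVec Δ ≤ ∑ i, |Δ i| * M := by
          rw [dotProduct]
          apply Finset.sum_le_sum
          intro i _
          calc Δ i * Ψ.mulVec Δ i ≤ |Δ i * Ψ.mulVec Δ i| := le_abs_self _
            _ = |Δ i| * |Ψ.mulVec Δ i| := abs_mul _ _
            _ ≤ |Δ i| * M := mul_le_mul_of_nonneg_left (hMle i) (abs_nonneg _)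
        have h2 : ∑ i, |Δ i| ≤ 2 + γ := by
          have := Finset.sum_add_sum_compl J fun i => |Δ i|
          rw [hone] at hcone
          calc ∑ i, |Δ i| = (∑ i ∈ J, |Δ i|) + ∑ i ∈ Jᶜ, |Δ i| := this.symm
            _ ≤ 1 + (1 + γ) * 1 := by rw [hone]; linarith
            _ = 2 + γ := by ring
        calc Δ ⬝ᵥ Ψ.mulVec Δ ≤ ∑ i, |Δ i| * M := h1
          _ = (∑ i, |Δ i|) * M := (Finset.sum_mul _ _ _).symm
          _ ≤ (2 + γ) * M := mul_le_mul_of_nonneg_right h2 hM0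
      have hmem : (J.card : ℝ) * (Δ ⬝ᵥ Ψ.mulVec Δ) / (∑ k ∈ J, |Δ k|) ^ 2 ∈ A :=
        ⟨Δ, hΔ0, hcone, rfl⟩
      calc sInf A ≤ (J.card : ℝ) * (Δ ⬝ᵥ Ψ.mulVec Δ) / (∑ k ∈ J, |Δ k|) ^ 2 :=
            csInf_le hAbdd hmem
        _ = (J.card : ℝ) * (Δ ⬝ᵥ Ψ.mulVec Δ) := by rw [hone]; ring
        _ ≤ (J.card : ℝ) * ((2 + γ) * M) :=
            mul_le_mul_of_nonneg_left hquad (Nat.cast_nonneg _)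
        _ = (2 + γ) * (J.card : ℝ) * M := by ring
    -- conclude
    have : sInf A / ((2 + γ) * (J.card : ℝ)) ≤ sInf B := by
      apply le_csInf hBne
      intro x hx
      rw [div_le_iff₀ hcpos]
      calc sInf A ≤ (2 + γ) * (J.card : ℝ) * x := key x hx
        _ = x * ((2 + γ) * (J.card : ℝ)) := by ring
    calc sInf A = sInf A / ((2 + γ) * (J.card : ℝ)) * ((2 + γ) * (J.card : ℝ)) := by
          rw [div_mul_cancel₀ _ hcpos.ne']
      _ ≤ sInf B * ((2 + γ) * (J.card : ℝ)) :=
          mul_le_mul_of_nonneg_right this hcpos.le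
      _ = (2 + γ) * (J.card : ℝ) * sInf B := by ring
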